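/- In the two-party setting with ζ[0] > 0, in any execution of the Eneström–Phragmén procedure a tie can occur at most once: if α[s] = β[s] for some s ≤ n, then α[s'] ≠ β[s'] for every s' with s < s' ≤ n. -/
import Mathlib


/-!
The Eneström–Phragmén procedure in the two-party setting: the candidates are two
parties `A` and `B` of unlimited capacity, and the vote types are `{A}`, `{B}` and
`{A,B}` with step-`s` weights (divided by the total vote `v`) denoted `α s`, `β s`
and `ζ s` respectively; `ρ n = q / v = 1 / (n + 1)` is the normalized Droop quota.
At step `s < n`, seat `s + 1` goes to `A` (recorded by `toA s = true`) or to `B`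
(`toA s = false`); the winner must maximize the support (`α s + ζ s` for `A`,
`β s + ζ s` for `B`), and the votes approving the winner are reduced according
to the quota rule.
-/

namespace EP2

/-- The normalized Droop quota `ρ = q / v = 1 / (n + 1)`. -/
noncomputable def ρ (n : ℕ) : ℝ := 1 / (n + 1)

/-- An execution of the Eneström–Phragmén procedure in the two-party setting, with
`n` seats and initial normalized weights `α0, β0, ζ0` of the vote types
`{A}`, `{B}`, `{A,B}`. -/
structure TPExec (n : ℕ) (α0 β0 ζ0 : ℝ) : Type where
  /-- normalized weight of the votes approving only `A` -/
  α : ℕ → ℝ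
  /-- normalized weight of the votes approving only `B` -/
  β : ℕ → ℝ
  /-- normalized weight of the votes approving both `A` and `B` -/
  ζ : ℕ → ℝ
  /-- `toA s = true` iff seat `s + 1` is allocated to party `A` -/
  toA : ℕ → Bool
  init_α : α 0 = α0
  init_β : β 0 = β0
  init_ζ : ζ 0 = ζ0
  /-- the winner maximizes the support: if `A` wins then `β s + ζ s ≤ α s + ζ s` -/
  choiceA : ∀ s < n, toA s = true → β s ≤ α s
  /-- the winner maximizes the support: if `B` wins then `α s + ζ s ≤ β s + ζ s` -/
  choiceB : ∀ s < n, toA s = false → α s ≤ β s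
  stepA_ge : ∀ s < n, toA s = true → ρ n ≤ α s + ζ s →
    α (s + 1) = (1 - ρ n / (α s + ζ s)) * α s ∧
    ζ (s + 1) = (1 - ρ n / (α s + ζ s)) * ζ s
  stepA_lt : ∀ s < n, toA s = true → α s + ζ s < ρ n →
    α (s + 1) = 0 ∧ ζ (s + 1) = 0
  stepA_β : ∀ s < n, toA s = true → β (s + 1) = β s
  stepB_ge : ∀ s < n, toA s = false → ρ n ≤ β s + ζ s →
    β (s + 1) = (1 - ρ n / (β s + ζ s)) * β s ∧
    ζ (s + 1) = (1 - ρ n / (β s + ζ s)) * ζ s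
  stepB_lt : ∀ s < n, toA s = false → β s + ζ s < ρ n →
    β (s + 1) = 0 ∧ ζ (s + 1) = 0
  stepB_α : ∀ s < n, toA s = false → α (s + 1) = α s

/-- Number of seats allocated to party `A` during steps `a, …, b - 1`. -/
def cntA {n : ℕ} {α0 β0 ζ0 : ℝ} (E : TPExec n α0 β0 ζ0) (a b : ℕ) : ℕ :=
  ((Finset.Ico a b).filter (fun s => E.toA s = true)).card

/-- Number of seats allocated to party `B` during steps `a, …, b - 1`. -/
def cntB {n : ℕ} {α0 β0 ζ0 : ℝ} (E : TPExec n α0 β0 ζ0) (a b : ℕ) : ℕ :=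
  ((Finset.Ico a b).filter (fun s => E.toA s = false)).card

/-- Total number of seats allocated to party `A`. -/
def nA {n : ℕ} {α0 β0 ζ0 : ℝ} (E : TPExec n α0 β0 ζ0) : ℕ := cntA E 0 n

end EP2

set_option maxHeartbeats 1000000 in
open EP2 in
/-- Remark 4.1 of the paper: in the two-party setting with `ζ[0] > 0`,
in any execution a tie can occur at most once: if `α[s] = β[s]` for some `s ≤ n`, then
`α[s'] ≠ β[s']` for every `s'` with `s < s' ≤ n`. -/
theorem enestrom_phragmen_two_party_tie_at_most_once
    (n : ℕ) (hn : 1 ≤ n) (α0 β0 ζ0 : ℝ)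
    (hα0 : 0 < α0) (hβ0 : 0 < β0) (hζ0 : 0 < ζ0) (hsum : α0 + β0 + ζ0 = 1)
    (E : TPExec n α0 β0 ζ0) (s : ℕ) (hs : s ≤ n) (htie : E.α s = E.β s) :
    ∀ s', s < s' → s' ≤ n → E.α s' ≠ E.β s' := by
  intro s' hss' hs'n
  have hsn : s < n := lt_of_lt_of_le hss' hs'n
  set R := ρ n with hRdef
  have hρpos : 0 < R := by
    rw [hRdef]; unfold EP2.ρ; positivity
  have hR1 : ((n : ℝ) + 1) * R = 1 := by
    rw [hRdef]; unfold EP2.ρ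
    field_simp
  set K := ζ0 / (α0 * β0) with hKdef
  have hK : 0 < K := by positivity
  -- global invariant
  have Inv : ∀ m ≤ n, 0 ≤ E.α m ∧ 0 ≤ E.β m ∧ 0 ≤ E.ζ m ∧
      E.α m + E.β m + E.ζ m = 1 - m * R ∧ E.ζ m = K * (E.α m * E.β m) := by
    intro m
    induction m with
    | zero =>
      intro _
      rw [E.init_α, E.init_β, E.init_ζ]
      refine ⟨hα0.le, hβ0.le, hζ0.le, by push_cast; linarith, ?_⟩
      rw [hKdef]; field_simp
    | succ m ih =>
      intro hm1
      have hmn : m < n := hm1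
      obtain ⟨ha, hb, hz, hsumm, hzf⟩ := ih hmn.le
      have hcast : (m : ℝ) ≤ (n : ℝ) - 1 := by
        have : (m : ℝ) + 1 ≤ (n : ℝ) := by exact_mod_cast hmn
        linarith
      have hsum2 : 2 * R ≤ E.α m + E.β m + E.ζ m := by
        have h1 : (m : ℝ) * R ≤ ((n : ℝ) - 1) * R :=
          mul_le_mul_of_nonneg_right hcast hρpos.le
        linarith
      cases htA : E.toA m with
      | true =>
        have hba : E.β m ≤ E.α m := E.choiceA m hmn htA
        have hw : R ≤ E.α m + E.ζ m := by linarith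
        have hwpos : 0 < E.α m + E.ζ m := lt_of_lt_of_le hρpos hw
        obtain ⟨hα1, hζ1⟩ := E.stepA_ge m hmn htA hw
        have hβ1 := E.stepA_β m hmn htA
        have hc : 0 ≤ 1 - R / (E.α m + E.ζ m) := by
          have := (div_le_one hwpos).2 hw
          linarith
        refine ⟨by rw [hα1]; exact mul_nonneg hc ha,
          by rw [hβ1]; exact hb,
          by rw [hζ1]; exact mul_nonneg hc hz, ?_, ?_⟩
        · rw [hα1, hβ1, hζ1]
          have key : (1 - R / (E.α m + E.ζ m)) * E.α m + E.β m
              + (1 - R / (E.α m + E.ζ m)) * E.ζ m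
              = E.α m + E.β m + E.ζ m - R := by
            field_simp
            ring
          rw [key, hsumm]
          push_cast; ring
        · rw [hα1, hβ1, hζ1, hzf]; ring
      | false =>
        have hba : E.α m ≤ E.β m := E.choiceB m hmn htA
        have hw : R ≤ E.β m + E.ζ m := by linarith
        have hwpos : 0 < E.β m + E.ζ m := lt_of_lt_of_le hρpos hw
        obtain ⟨hβ1, hζ1⟩ := E.stepB_ge m hmn htA hw
        have hα1 := E.stepB_α m hmn htA
        have hc : 0 ≤ 1 - R / (E.β m + E.ζ m) := by
          have := (div_le_one hwpos).2 hw
          linarith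
        refine ⟨by rw [hα1]; exact ha,
          by rw [hβ1]; exact mul_nonneg hc hb,
          by rw [hζ1]; exact mul_nonneg hc hz, ?_, ?_⟩
        · rw [hα1, hβ1, hζ1]
          have key : E.α m + (1 - R / (E.β m + E.ζ m)) * E.β m
              + (1 - R / (E.β m + E.ζ m)) * E.ζ m
              = E.α m + E.β m + E.ζ m - R := by
            field_simp
            ring
          rw [key, hsumm]
          push_cast; ring
        · rw [hα1, hβ1, hζ1, hzf]; ring
  -- facts at the tie step
  obtain ⟨has, hbs, hzs, hsums, hzfs⟩ := Inv s hs
  have hcasts : (s : ℝ) ≤ (n : ℝ) - 1 := by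
    have : (s : ℝ) + 1 ≤ (n : ℝ) := by exact_mod_cast hsn
    linarith
  have hsRle : (s : ℝ) * R ≤ ((n : ℝ) - 1) * R :=
    mul_le_mul_of_nonneg_right hcasts hρpos.le
  have htpos : 0 < E.α s := by
    by_contra h
    push_neg at h
    have hα0' : E.α s = 0 := le_antisymm h has
    have hβ0' : E.β s = 0 := htie ▸ hα0'
    have hζ0' : E.ζ s = 0 := by rw [hzfs, hα0', hβ0']; ring
    rw [hα0', hβ0', hζ0'] at hsums
    linarith
  -- the alternating invariant
  have Qstep : ∀ m < n,
      ((E.α m < E.β m ∧ E.β m - E.α m ≤ R / (1 + K * E.β m)) ∨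
       (E.β m < E.α m ∧ E.α m - E.β m ≤ R / (1 + K * E.α m))) →
      ((E.α (m+1) < E.β (m+1) ∧ E.β (m+1) - E.α (m+1) ≤ R / (1 + K * E.β (m+1))) ∨
       (E.β (m+1) < E.α (m+1) ∧ E.α (m+1) - E.β (m+1) ≤ R / (1 + K * E.α (m+1)))) := by
    intro m hmn hQ
    obtain ⟨ha, hb, hz, hsumm, hzf⟩ := Inv m hmn.le
    have hcast : (m : ℝ) ≤ (n : ℝ) - 1 := by
      have : (m : ℝ) + 1 ≤ (n : ℝ) := by exact_mod_cast hmn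
      linarith
    have hmRle : (m : ℝ) * R ≤ ((n : ℝ) - 1) * R :=
      mul_le_mul_of_nonneg_right hcast hρpos.le
    have hsum2 : 2 * R ≤ E.α m + E.β m + E.ζ m := by linarith
    rcases hQ with ⟨hlt, hgap⟩ | ⟨hlt, hgap⟩
    · -- α < β, so B wins
      have htA : E.toA m = false := by
        cases htA : E.toA m with
        | true => exact absurd (E.choiceA m hmn htA) (not_le.2 hlt)
        | false => rfl
      have hβpos : 0 < E.β m := lt_of_le_of_lt ha hlt
      have hw : R ≤ E.β m + E.ζ m := by linarith
      obtain ⟨hβ1, hζ1⟩ := E.stepB_ge m hmn htA hw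
      have hα1 := E.stepB_α m hmn htA
      have hd1 : 0 < 1 + K * E.α m := by positivity
      have hd2 : 0 < 1 + K * E.β m := by positivity
      have hβ1' : E.β (m+1) = E.β m - R / (1 + K * E.α m) := by
        rw [hβ1, hzf]
        have hne : E.β m ≠ 0 := ne_of_gt hβpos
        field_simp
        ring
      have hdd : R / (1 + K * E.β m) < R / (1 + K * E.α m) :=
        div_lt_div_of_pos_left hρpos hd1
          (by have := mul_lt_mul_of_pos_left hlt hK; linarith)
      right
      constructor
      · rw [hα1, hβ1']; linarith
      · rw [hα1, hβ1']
        have hnn : 0 ≤ E.β m - E.α m := le_of_lt (by linarith)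
        have : E.α m - (E.β m - R / (1 + K * E.α m)) ≤ R / (1 + K * E.α m) := by
          linarith
        linarith
    · -- β < α, so A wins
      have htA : E.toA m = true := by
        cases htA : E.toA m with
        | true => rfl
        | false => exact absurd (E.choiceB m hmn htA) (not_le.2 hlt)
      have hαpos : 0 < E.α m := lt_of_le_of_lt hb hlt
      have hw : R ≤ E.α m + E.ζ m := by linarith
      obtain ⟨hα1, hζ1⟩ := E.stepA_ge m hmn htA hw
      have hβ1 := E.stepA_β m hmn htA
      have hd1 : 0 < 1 + K * E.β m := by positivity
      have hd2 : 0 < 1 + K * E.α m := by positivity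
      have hα1' : E.α (m+1) = E.α m - R / (1 + K * E.β m) := by
        rw [hα1, hzf]
        have hne : E.α m ≠ 0 := ne_of_gt hαpos
        field_simp
        ring
      have hdd : R / (1 + K * E.α m) < R / (1 + K * E.β m) :=
        div_lt_div_of_pos_left hρpos hd1
          (by have := mul_lt_mul_of_pos_left hlt hK; linarith)
      left
      constructor
      · rw [hβ1, hα1']; linarith
      · rw [hβ1, hα1']; linarith
  -- base case: the step right after the tie
  have Qbase : (E.α (s+1) < E.β (s+1) ∧ E.β (s+1) - E.α (s+1) ≤ R / (1 + K * E.β (s+1))) ∨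
      (E.β (s+1) < E.α (s+1) ∧ E.α (s+1) - E.β (s+1) ≤ R / (1 + K * E.α (s+1))) := by
    have hsum2 : 2 * R ≤ E.α s + E.β s + E.ζ s := by linarith
    have hd : 0 < 1 + K * E.α s := by positivity
    cases htA : E.toA s with
    | true =>
      have hw : R ≤ E.α s + E.ζ s := by linarith [htie]
      obtain ⟨hα1, hζ1⟩ := E.stepA_ge s hsn htA hw
      have hβ1 := E.stepA_β s hsn htA
      have hα1' : E.α (s+1) = E.α s - R / (1 + K * E.β s) := by
        rw [hα1, hzfs]
        have hne : E.α s ≠ 0 := ne_of_gt htpos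
        field_simp
        ring
      have hd2 : 0 < 1 + K * E.β s := by positivity
      left
      constructor
      · rw [hβ1, hα1']
        have : 0 < R / (1 + K * E.β s) := div_pos hρpos hd2
        linarith [htie]
      · rw [hβ1, hα1']
        have : E.β s - (E.α s - R / (1 + K * E.β s)) = R / (1 + K * E.β s) := by
          rw [← htie]; ring
        linarith
    | false =>
      have hw : R ≤ E.β s + E.ζ s := by linarith [htie]
      obtain ⟨hβ1, hζ1⟩ := E.stepB_ge s hsn htA hw
      have hα1 := E.stepB_α s hsn htA
      have hβpos : 0 < E.β s := htie ▸ htpos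
      have hβ1' : E.β (s+1) = E.β s - R / (1 + K * E.α s) := by
        rw [hβ1, hzfs]
        have hne : E.β s ≠ 0 := ne_of_gt hβpos
        field_simp
        ring
      right
      constructor
      · rw [hα1, hβ1']
        have : 0 < R / (1 + K * E.α s) := div_pos hρpos hd
        linarith [htie]
      · rw [hα1, hβ1']
        have : E.α s - (E.β s - R / (1 + K * E.α s)) = R / (1 + K * E.α s) := by
          rw [← htie]; ring
        linarith
  -- propagate Q from s+1 to s'
  have QQ : ∀ m, s + 1 ≤ m → m ≤ n →
      (E.α m < E.β m ∧ E.β m - E.α m ≤ R / (1 + K * E.β m)) ∨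
      (E.β m < E.α m ∧ E.α m - E.β m ≤ R / (1 + K * E.α m)) := by
    intro m hm
    induction m, hm using Nat.le_induction with
    | base => intro _; exact Qbase
    | succ m hm ih =>
      intro hm1
      exact Qstep m hm1 (ih (Nat.le_of_succ_le hm1))
  rcases QQ s' hss' hs'n with ⟨h, _⟩ | ⟨h, _⟩
  · exact ne_of_lt h
  · exact ne_of_gt h
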